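/- Let X be a set and let τ₁ ⊆ τ₂ be topologies on X such that τ₁ is zero-dimensional (it has a base of τ₁-clopen sets) and every point of X has a τ₂-neighborhood that is compact in (X, τ₁). Then for every n ≥ 1, on F_n(X): the Vietoris topology V(τ₁) is coarser than the Vietoris topology V(τ₂), V(τ₁) is zero-dimensional, and every element of F_n(X) has a V(τ₂)-neighborhood that is compact with respect to V(τ₁). -/

import Mathlib

open Set Topology

noncomputable section

/-- The Vietoris topology on the powerset of `X` induced by a topology `τ`,
generated by the sets `{F | F ⊆ U}` and `{F | F ∩ U ≠ ∅}` for `U` a nonempty `τ`-open set. -/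
def VietorisTop {X : Type*} (τ : TopologicalSpace X) : TopologicalSpace (Set X) :=
  TopologicalSpace.generateFrom
    ({S : Set (Set X) | ∃ U : Set X, IsOpen[τ] U ∧ U.Nonempty ∧ S = {F : Set X | F ⊆ U}} ∪
     {S : Set (Set X) | ∃ U : Set X, IsOpen[τ] U ∧ U.Nonempty ∧ S = {F : Set X | (F ∩ U).Nonempty}})

/-- The underlying set of the `n`-th symmetric product: nonempty subsets of `X`
with at most `n` points. -/
def FnSub (n : ℕ) (X : Type*) : Type _ :=
  {F : Set X // F.Nonempty ∧ F.Finite ∧ F.ncard ≤ n}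

/-- The Vietoris topology on `F_n(X)` induced by a topology `τ` on `X`. -/
def VietFn (n : ℕ) {X : Type*} (τ : TopologicalSpace X) : TopologicalSpace (FnSub n X) :=
  (VietorisTop τ).induced Subtype.val

/-- A topology is zero-dimensional if it has a base of clopen sets. -/
def IsZeroDimTop {X : Type*} (τ : TopologicalSpace X) : Prop :=
  ∀ U : Set X, IsOpen[τ] U → ∀ x ∈ U, ∃ V : Set X, IsOpen[τ] V ∧ IsClosed[τ] V ∧ x ∈ V ∧ V ⊆ U

section Aux

variable {X : Type*}

lemma vietoris_mono' (τ₁ τ₂ : TopologicalSpace X)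
    (hle : ∀ U, IsOpen[τ₁] U → IsOpen[τ₂] U) :
    VietorisTop τ₂ ≤ VietorisTop τ₁ := by
  apply le_generateFrom
  rintro S (⟨U, hU, hne, rfl⟩ | ⟨U, hU, hne, rfl⟩)
  · exact TopologicalSpace.GenerateOpen.basic _ (Or.inl ⟨U, hle U hU, hne, rfl⟩)
  · exact TopologicalSpace.GenerateOpen.basic _ (Or.inr ⟨U, hle U hU, hne, rfl⟩)

lemma isOpen_miss' (n : ℕ) (τ : TopologicalSpace X) {U : Set X} (hU : IsOpen[τ] U)
    (hne : U.Nonempty) : IsOpen[VietFn n τ] {G : FnSub n X | G.1 ⊆ U} :=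
  ⟨{F : Set X | F ⊆ U}, TopologicalSpace.GenerateOpen.basic _ (Or.inl ⟨U, hU, hne, rfl⟩), rfl⟩

lemma isOpen_hit' (n : ℕ) (τ : TopologicalSpace X) {U : Set X} (hU : IsOpen[τ] U)
    (hne : U.Nonempty) : IsOpen[VietFn n τ] {G : FnSub n X | (G.1 ∩ U).Nonempty} :=
  ⟨{F : Set X | (F ∩ U).Nonempty},
    TopologicalSpace.GenerateOpen.basic _ (Or.inr ⟨U, hU, hne, rfl⟩), rfl⟩

lemma isClosed_miss' (n : ℕ) (τ : TopologicalSpace X) {U : Set X} (hU : IsClosed[τ] U) :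
    IsClosed[VietFn n τ] {G : FnSub n X | G.1 ⊆ U} := by
  letI := VietFn n τ
  rw [← isOpen_compl_iff]
  have : {G : FnSub n X | G.1 ⊆ U}ᶜ = {G : FnSub n X | (G.1 ∩ Uᶜ).Nonempty} := by
    ext G; simp [Set.inter_compl_nonempty_iff]
  rw [this]
  rcases eq_empty_or_nonempty Uᶜ with h | h
  · have : {G : FnSub n X | (G.1 ∩ Uᶜ).Nonempty} = ∅ := by
      ext G; simp [h]
    rw [this]; exact isOpen_empty
  · exact isOpen_hit' n τ hU.isOpen_compl h

lemma isClosed_hit' (n : ℕ) (τ : TopologicalSpace X) {U : Set X} (hU : IsClosed[τ] U) :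
    IsClosed[VietFn n τ] {G : FnSub n X | (G.1 ∩ U).Nonempty} := by
  letI := VietFn n τ
  rw [← isOpen_compl_iff]
  have : {G : FnSub n X | (G.1 ∩ U).Nonempty}ᶜ = {G : FnSub n X | G.1 ⊆ Uᶜ} := by
    ext G
    simp only [mem_compl_iff, mem_setOf_eq, Set.not_nonempty_iff_eq_empty,
      ← Set.disjoint_iff_inter_eq_empty, Set.subset_compl_iff_disjoint_right]
  rw [this]
  rcases eq_empty_or_nonempty Uᶜ with h | h
  · have : {G : FnSub n X | G.1 ⊆ Uᶜ} = ∅ := by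
      ext G
      simp only [h, Set.subset_empty_iff, mem_setOf_eq, mem_empty_iff_false, iff_false]
      exact fun hGe => G.2.1.ne_empty hGe
    rw [this]; exact isOpen_empty
  · exact isOpen_miss' n τ hU.isOpen_compl h

lemma zerodim_vietFn' (n : ℕ) (τ : TopologicalSpace X) (hzd : IsZeroDimTop τ) :
    IsZeroDimTop (VietFn n τ) := by
  intro S hS F hF
  obtain ⟨T, hT, rfl⟩ := hS
  letI : TopologicalSpace (Set X) := VietorisTop τ
  letI : TopologicalSpace (FnSub n X) := VietFn n τ
  have hbasis := TopologicalSpace.isTopologicalBasis_of_subbasis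
    (t := VietorisTop τ) (rfl)
  obtain ⟨B, ⟨f, ⟨hffin, hfsub⟩, rfl⟩, hFmem, hBsub⟩ :=
    hbasis.exists_subset_of_mem_open (a := F.1) hF hT
  have key : ∀ s, s ∈ f → ∃ C : Set (FnSub n X), IsOpen[VietFn n τ] C ∧
      IsClosed[VietFn n τ] C ∧ F ∈ C ∧ C ⊆ Subtype.val ⁻¹' s := by
    intro s hs
    have hFs : F.1 ∈ s := Set.mem_sInter.1 hFmem s hs
    rcases hfsub hs with ⟨U, hU, hUne, rfl⟩ | ⟨U, hU, hUne, rfl⟩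
    · have hFU : F.1 ⊆ U := hFs
      choose V hVo hVc hVm hVs using fun x : F.1 => hzd U hU x (hFU x.2)
      haveI : Finite F.1 := F.2.2.1.to_subtype
      refine ⟨{G : FnSub n X | G.1 ⊆ ⋃ x : F.1, V x}, ?_, ?_, ?_, ?_⟩
      · exact isOpen_miss' n τ (isOpen_iUnion hVo)
          (F.2.1.elim fun x hx => ⟨x, Set.mem_iUnion.2 ⟨⟨x, hx⟩, hVm _⟩⟩)
      · exact isClosed_miss' n τ (isClosed_iUnion_of_finite hVc)
      · exact fun x hx => Set.mem_iUnion.2 ⟨⟨x, hx⟩, hVm _⟩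
      · exact fun G hG => hG.trans (Set.iUnion_subset fun x => hVs x)
    · obtain ⟨x, hxF, hxU⟩ := hFs
      obtain ⟨V, hVo, hVc, hVm, hVs⟩ := hzd U hU x hxU
      refine ⟨{G : FnSub n X | (G.1 ∩ V).Nonempty}, isOpen_hit' n τ hVo ⟨x, hVm⟩,
        isClosed_hit' n τ hVc, ⟨x, hxF, hVm⟩, ?_⟩
      exact fun G ⟨y, hyG, hyV⟩ => ⟨y, hyG, hVs hyV⟩
  choose C hCo hCc hCm hCs using key
  haveI : Finite f := hffin
  refine ⟨⋂ s : f, C s.1 s.2, ?_, ?_, ?_, ?_⟩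
  · exact isOpen_iInter_of_finite fun s => hCo s.1 s.2
  · exact isClosed_iInter fun s => hCc s.1 s.2
  · exact Set.mem_iInter.2 fun s => hCm s.1 s.2
  · intro G hG
    apply hBsub
    intro s hs
    exact hCs s hs (Set.mem_iInter.1 hG ⟨s, hs⟩)

lemma exists_range_eq' {n : ℕ} {G : Set X} (hne : G.Nonempty) (hfin : G.Finite)
    (hcard : G.ncard ≤ n) : ∃ x : Fin n → X, Set.range x = G := by
  obtain ⟨g0, hg0⟩ := hne
  set l := hfin.toFinset.toList with hl
  have hmem : ∀ a, a ∈ l ↔ a ∈ G := by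
    intro a; rw [hl, Finset.mem_toList, Set.Finite.mem_toFinset]
  have hlen : l.length = G.ncard := by
    rw [hl, Finset.length_toList, Set.ncard_eq_toFinset_card _ hfin]
  refine ⟨fun i => l.getD i g0, ?_⟩
  apply Set.eq_of_subset_of_subset
  · rintro _ ⟨i, rfl⟩
    by_cases h : (i : ℕ) < l.length
    · show l.getD i g0 ∈ G
      rw [List.getD_eq_getElem _ _ h]
      exact (hmem _).1 (List.getElem_mem _)
    · show l.getD i g0 ∈ G
      rw [List.getD_eq_default _ _ (not_lt.1 h)]
      exact hg0
  · intro y hy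
    obtain ⟨i, hi, hgy⟩ := List.getElem_of_mem ((hmem y).2 hy)
    have hi' : i < n := lt_of_lt_of_le hi (hlen ▸ hcard)
    refine ⟨⟨i, hi'⟩, ?_⟩
    show l.getD (((⟨i, hi'⟩ : Fin n)) : ℕ) g0 = y
    rw [List.getD_eq_getElem _ _ (show ((⟨i, hi'⟩ : Fin n) : ℕ) < l.length from hi)]
    exact hgy

/-- The canonical surjection from `n`-tuples onto `F_n(X)`. -/
def toFn' (n : ℕ) (hn : 1 ≤ n) (x : Fin n → X) : FnSub n X :=
  ⟨Set.range x, ⟨x ⟨0, hn⟩, Set.mem_range_self _⟩, Set.finite_range x, by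
    rw [← Set.image_univ]
    exact le_trans (Set.ncard_image_le Set.finite_univ) (by simp [Set.ncard_univ])⟩

lemma continuous_toFn' (n : ℕ) (hn : 1 ≤ n) (τ : TopologicalSpace X) :
    Continuous[Pi.topologicalSpace (t₂ := fun _ => τ), VietFn n τ] (toFn' n hn) := by
  letI := τ
  letI : TopologicalSpace (FnSub n X) := VietFn n τ
  apply continuous_induced_rng.mpr
  apply continuous_generateFrom_iff.mpr
  rintro S (⟨U, hU, hUne, rfl⟩ | ⟨U, hU, hUne, rfl⟩)
  · have : (Subtype.val ∘ toFn' n hn) ⁻¹' {F : Set X | F ⊆ U} =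
        ⋂ i, (fun x : Fin n → X => x i) ⁻¹' U := by
      ext x
      simp [toFn', Set.range_subset_iff]
      exact Set.range_subset_iff
    exact (congrArg (IsOpen[Pi.topologicalSpace (t₂ := fun _ => τ)]) this).mpr
      (isOpen_iInter_of_finite fun i => (continuous_apply (A := fun _ : Fin n => X) i).isOpen_preimage U hU)
  · have : (Subtype.val ∘ toFn' n hn) ⁻¹' {F : Set X | (F ∩ U).Nonempty} =
        ⋃ i, (fun x : Fin n → X => x i) ⁻¹' U := by
      ext x
      simp only [Set.mem_preimage, Function.comp_apply, Set.mem_iUnion, mem_setOf_eq]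
      constructor
      · rintro ⟨y, ⟨i, rfl⟩, hyU⟩; exact ⟨i, hyU⟩
      · rintro ⟨i, hi⟩; exact ⟨x i, Set.mem_range_self i, hi⟩
    exact (congrArg (IsOpen[Pi.topologicalSpace (t₂ := fun _ => τ)]) this).mpr
      (isOpen_iUnion fun i => (continuous_apply (A := fun _ : Fin n => X) i).isOpen_preimage U hU)

lemma compact_miss' (n : ℕ) (hn : 1 ≤ n) (τ : TopologicalSpace X) {K : Set X}
    (hK : @IsCompact X τ K) :
    @IsCompact (FnSub n X) (VietFn n τ) {G : FnSub n X | G.1 ⊆ K} := by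
  letI := τ
  letI : TopologicalSpace (FnSub n X) := VietFn n τ
  have himg : toFn' n hn '' (Set.univ.pi fun _ : Fin n => K) = {G : FnSub n X | G.1 ⊆ K} := by
    apply Set.eq_of_subset_of_subset
    · rintro _ ⟨x, hx, rfl⟩
      rintro _ ⟨i, rfl⟩
      exact hx i (Set.mem_univ i)
    · intro G hG
      obtain ⟨x, hx⟩ := exists_range_eq' G.2.1 G.2.2.1 G.2.2.2
      refine ⟨x, fun i _ => hG (hx ▸ Set.mem_range_self i), Subtype.ext hx⟩
  rw [← himg]
  exact (isCompact_univ_pi fun _ => hK).image (continuous_toFn' n hn τ)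

lemma isCompact_iUnion'' (τ : TopologicalSpace X) {ι : Sort*} [Finite ι] {s : ι → Set X}
    (h : ∀ i, @IsCompact X τ (s i)) : @IsCompact X τ (⋃ i, s i) := by
  letI := τ; exact isCompact_iUnion h

end Aux

/-- Property `C₁` passes to symmetric products: if `τ₁ ⊆ τ₂`, `τ₁` is zero-dimensional, and
every point has a `τ₂`-neighborhood that is `τ₁`-compact, then on `F_n(X)` (for `n ≥ 1`)
the Vietoris topology of `τ₁` is coarser than that of `τ₂`, is zero-dimensional, and every
element has a `V(τ₂)`-neighborhood that is `V(τ₁)`-compact. -/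
theorem property_C1_hypFn {X : Type*} (τ₁ τ₂ : TopologicalSpace X)
    (hle : ∀ U : Set X, IsOpen[τ₁] U → IsOpen[τ₂] U)
    (hzd : IsZeroDimTop τ₁)
    (hcpt : ∀ x : X, ∃ N : Set X, N ∈ @nhds X τ₂ x ∧ @IsCompact X τ₁ N)
    (n : ℕ) (hn : 1 ≤ n) :
    (∀ S : Set (FnSub n X), IsOpen[VietFn n τ₁] S → IsOpen[VietFn n τ₂] S) ∧
    IsZeroDimTop (VietFn n τ₁) ∧
    (∀ F : FnSub n X, ∃ N : Set (FnSub n X),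
      N ∈ @nhds (FnSub n X) (VietFn n τ₂) F ∧ @IsCompact (FnSub n X) (VietFn n τ₁) N) := by
  refine ⟨?_, zerodim_vietFn' n τ₁ hzd, ?_⟩
  · have h : VietFn n τ₂ ≤ VietFn n τ₁ := induced_mono (vietoris_mono' τ₁ τ₂ hle)
    exact fun S hS => h S hS
  · intro F
    letI := τ₂
    letI : TopologicalSpace (FnSub n X) := VietFn n τ₂
    choose N hNn hNc using fun x : F.1 => hcpt x
    choose U hUo hUm hUs using fun x : F.1 => mem_nhds_iff.1 (hNn x)
    haveI : Finite F.1 := F.2.2.1.to_subtype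
    refine ⟨{G : FnSub n X | G.1 ⊆ ⋃ x : F.1, N x}, ?_, ?_⟩
    · apply mem_nhds_iff.2
      refine ⟨{G : FnSub n X | G.1 ⊆ ⋃ x : F.1, U x}, ?_, ?_, ?_⟩
      · exact fun G hG => hG.trans (Set.iUnion_mono fun x => hUo x)
      · exact isOpen_miss' n τ₂ (isOpen_iUnion hUm)
          (F.2.1.elim fun x hx => ⟨x, Set.mem_iUnion.2 ⟨⟨x, hx⟩, hUs _⟩⟩)
      · exact fun x hx => Set.mem_iUnion.2 ⟨⟨x, hx⟩, hUs _⟩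
    · have hK : @IsCompact X τ₁ (⋃ x : F.1, N x) := isCompact_iUnion'' τ₁ fun x => hNc x
      exact compact_miss' n hn τ₁ hK

end
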